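/- arXiv:math/0403113 — 2 statements merged into one kernel-verified Lean document; each statement's English description precedes it below -/
import Mathlib

section
/- In the sedenions, with A = (1/2)(i_3 + i_10), B = (1/2)(i_6 + i_15), C = (1/2)(i_5 + i_12), the cyclic 'sign-switched' products satisfy A·B = C, B·C = A, and C·A = B, while A² = B² = C² = −1/2. -/
/-- The Cayley-Dickson tower of algebras over ℝ: `CD n` has dimension `2^n`. -/
def CD : ℕ → Type
  | 0 => ℝ
  | n+1 => CD n × CD n

noncomputable instance instCDAddCommGroup : (n : ℕ) → AddCommGroup (CD n)
  | 0 => inferInstanceAs (AddCommGroup ℝ)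
  | n+1 => @Prod.instAddCommGroup _ _ (instCDAddCommGroup n) (instCDAddCommGroup n)

/-- Cayley-Dickson conjugation. -/
noncomputable def CD.conj : {n : ℕ} → CD n → CD n
  | 0, x => x
  | _+1, (a, b) => (CD.conj a, -b)

/-- Cayley-Dickson multiplication: `(a,b)(c,d) = (ac − d* b, da + b c*)`. -/
noncomputable def CD.mul : {n : ℕ} → CD n → CD n → CD n
  | 0, x, y => (show ℝ from x) * (show ℝ from y)
  | _+1, (a, b), (c, d) =>
      (CD.mul a c - CD.mul (CD.conj d) b, CD.mul d a + CD.mul b (CD.conj c))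

/-- The standard basis unit `i_k` of `CD n`, for `k < 2^n`. -/
noncomputable def CD.e : (n : ℕ) → ℕ → CD n
  | 0, _ => (1 : ℝ)
  | n+1, k => if k < 2^n then (CD.e n k, 0) else (0, CD.e n (k - 2^n))


noncomputable instance instCDModule : (n : ℕ) → Module ℝ (CD n)
  | 0 => inferInstanceAs (Module ℝ ℝ)
  | n+1 =>
      letI := instCDModule n
      inferInstanceAs (Module ℝ (CD n × CD n))


@[simp] lemma CD.add_mk1 (a b c d : CD 0) :
    HAdd.hAdd (α := CD 1) (β := CD 1) (γ := CD 1) (a, b) (c, d)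
      = (((a + c, b + d) : CD 0 × CD 0) : CD 1) := rfl

@[simp] lemma CD.smul_mk1 (r : ℝ) (a b : CD 0) :
    HSMul.hSMul (α := ℝ) (β := CD 1) (γ := CD 1) r (a, b)
      = (((r • a, r • b) : CD 0 × CD 0) : CD 1) := rfl

@[simp] lemma CD.neg_mk1 (a b : CD 0) :
    Neg.neg (α := CD 1) (a, b) = (((-a, -b) : CD 0 × CD 0) : CD 1) := rfl

@[simp] lemma CD.add_mk2 (a b c d : CD 1) :
    HAdd.hAdd (α := CD 2) (β := CD 2) (γ := CD 2) (a, b) (c, d)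
      = (((a + c, b + d) : CD 1 × CD 1) : CD 2) := rfl

@[simp] lemma CD.smul_mk2 (r : ℝ) (a b : CD 1) :
    HSMul.hSMul (α := ℝ) (β := CD 2) (γ := CD 2) r (a, b)
      = (((r • a, r • b) : CD 1 × CD 1) : CD 2) := rfl

@[simp] lemma CD.neg_mk2 (a b : CD 1) :
    Neg.neg (α := CD 2) (a, b) = (((-a, -b) : CD 1 × CD 1) : CD 2) := rfl

@[simp] lemma CD.add_mk3 (a b c d : CD 2) :
    HAdd.hAdd (α := CD 3) (β := CD 3) (γ := CD 3) (a, b) (c, d)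
      = (((a + c, b + d) : CD 2 × CD 2) : CD 3) := rfl

@[simp] lemma CD.smul_mk3 (r : ℝ) (a b : CD 2) :
    HSMul.hSMul (α := ℝ) (β := CD 3) (γ := CD 3) r (a, b)
      = (((r • a, r • b) : CD 2 × CD 2) : CD 3) := rfl

@[simp] lemma CD.neg_mk3 (a b : CD 2) :
    Neg.neg (α := CD 3) (a, b) = (((-a, -b) : CD 2 × CD 2) : CD 3) := rfl

@[simp] lemma CD.add_mk4 (a b c d : CD 3) :
    HAdd.hAdd (α := CD 4) (β := CD 4) (γ := CD 4) (a, b) (c, d)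
      = (((a + c, b + d) : CD 3 × CD 3) : CD 4) := rfl

@[simp] lemma CD.smul_mk4 (r : ℝ) (a b : CD 3) :
    HSMul.hSMul (α := ℝ) (β := CD 4) (γ := CD 4) r (a, b)
      = (((r • a, r • b) : CD 3 × CD 3) : CD 4) := rfl

@[simp] lemma CD.neg_mk4 (a b : CD 3) :
    Neg.neg (α := CD 4) (a, b) = (((-a, -b) : CD 3 × CD 3) : CD 4) := rfl

@[simp] lemma CD.sub_mk1 (a b c d : CD 0) :
    HSub.hSub (α := CD 1) (β := CD 1) (γ := CD 1) (a, b) (c, d)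
      = (((a - c, b - d) : CD 0 × CD 0) : CD 1) := rfl

@[simp] lemma CD.sub_mk2 (a b c d : CD 1) :
    HSub.hSub (α := CD 2) (β := CD 2) (γ := CD 2) (a, b) (c, d)
      = (((a - c, b - d) : CD 1 × CD 1) : CD 2) := rfl

@[simp] lemma CD.sub_mk3 (a b c d : CD 2) :
    HSub.hSub (α := CD 3) (β := CD 3) (γ := CD 3) (a, b) (c, d)
      = (((a - c, b - d) : CD 2 × CD 2) : CD 3) := rfl

@[simp] lemma CD.sub_mk4 (a b c d : CD 3) :
    HSub.hSub (α := CD 4) (β := CD 4) (γ := CD 4) (a, b) (c, d)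
      = (((a - c, b - d) : CD 3 × CD 3) : CD 4) := rfl

@[simp] lemma CD.sub_real (x y : CD 0) :
    (x - y : CD 0) = (show CD 0 from (show ℝ from x) - (show ℝ from y)) := rfl

@[simp] lemma CD.add_real (x y : CD 0) :
    (x + y : CD 0) = (show CD 0 from (show ℝ from x) + (show ℝ from y)) := rfl

@[simp] lemma CD.smul_real (r : ℝ) (x : CD 0) : (r • x : CD 0) = (show CD 0 from r * (show ℝ from x)) := rfl

@[simp] lemma CD.neg_real (x : CD 0) : (-x : CD 0) = (show CD 0 from -(show ℝ from x)) := rfl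

/-- A real number viewed as an element of `CD 0`. -/
def CD.ofReal (x : ℝ) : CD 0 := x

/-- A pair viewed as an element of `CD (n+1)`. -/
def CD.mk {n : ℕ} (a b : CD n) : CD (n+1) := (a, b)

lemma CD.e_zero' (k : ℕ) : CD.e 0 k = CD.ofReal 1 := rfl

lemma CD.e_succ' (n k : ℕ) :
    CD.e (n+1) k = if k < 2^n then CD.mk (CD.e n k) 0 else CD.mk 0 (CD.e n (k - 2^n)) := rfl

lemma CD.zero_succ' (n : ℕ) : (0 : CD (n+1)) = CD.mk 0 0 := rfl

lemma CD.zero_real' : (0 : CD 0) = CD.ofReal 0 := rfl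

lemma CD.add_succ' (n : ℕ) (a b c d : CD n) : CD.mk a b + CD.mk c d = CD.mk (a + c) (b + d) := rfl

lemma CD.sub_succ' (n : ℕ) (a b c d : CD n) : CD.mk a b - CD.mk c d = CD.mk (a - c) (b - d) := rfl

lemma CD.neg_succ' (n : ℕ) (a b : CD n) : -CD.mk a b = CD.mk (-a) (-b) := rfl

lemma CD.smul_succ' (n : ℕ) (r : ℝ) (a b : CD n) : r • CD.mk a b = CD.mk (r • a) (r • b) := rfl

lemma CD.mul_succ' (n : ℕ) (a b c d : CD n) :
    CD.mul (CD.mk a b) (CD.mk c d)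
      = CD.mk (CD.mul a c - CD.mul (CD.conj d) b) (CD.mul d a + CD.mul b (CD.conj c)) := rfl

lemma CD.conj_succ' (n : ℕ) (a b : CD n) : CD.conj (CD.mk a b) = CD.mk (CD.conj a) (-b) := rfl

lemma CD.mk_inj' (n : ℕ) (a b c d : CD n) : CD.mk a b = CD.mk c d ↔ a = c ∧ b = d := Prod.ext_iff

lemma CD.conj_real' (x : ℝ) : CD.conj (CD.ofReal x) = CD.ofReal x := rfl

lemma CD.mul_real' (x y : ℝ) : CD.mul (CD.ofReal x) (CD.ofReal y) = CD.ofReal (x * y) := rfl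

lemma CD.add_real' (x y : ℝ) : CD.ofReal x + CD.ofReal y = CD.ofReal (x + y) := rfl

lemma CD.sub_real' (x y : ℝ) : CD.ofReal x - CD.ofReal y = CD.ofReal (x - y) := rfl

lemma CD.neg_real' (x : ℝ) : -CD.ofReal x = CD.ofReal (-x) := rfl

lemma CD.smul_real' (r x : ℝ) : r • CD.ofReal x = CD.ofReal (r * x) := rfl

lemma CD.ofReal_inj' (x y : ℝ) : CD.ofReal x = CD.ofReal y ↔ x = y := Iff.rfl

/-- The half-scaled '/' diagonals of Sail ABC of Box-Kite I satisfy the cyclic products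
`A·B = C`, `B·C = A`, `C·A = B`, with `A² = B² = C² = −1/2`. -/
theorem quizzical_quaternion_cycle :
    let A := (1/2 : ℝ) • (CD.e 4 3 + CD.e 4 10)
    let B := (1/2 : ℝ) • (CD.e 4 6 + CD.e 4 15)
    let C := (1/2 : ℝ) • (CD.e 4 5 + CD.e 4 12)
    CD.mul A B = C ∧ CD.mul B C = A ∧ CD.mul C A = B ∧
    CD.mul A A = -((1/2 : ℝ) • CD.e 4 0) ∧
    CD.mul B B = -((1/2 : ℝ) • CD.e 4 0) ∧
    CD.mul C C = -((1/2 : ℝ) • CD.e 4 0) := by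
  refine ⟨?_, ?_, ?_, ?_, ?_, ?_⟩ <;>
  · show _ = _
    simp only [CD.e_succ', CD.e_zero', Nat.reducePow, Nat.reduceLT, Nat.reduceSub, ↓reduceIte, CD.zero_succ',
      CD.zero_real', CD.add_succ', CD.sub_succ', CD.neg_succ', CD.smul_succ', CD.mul_succ', CD.conj_succ',
      CD.mk_inj', CD.conj_real', CD.mul_real', CD.add_real', CD.sub_real', CD.neg_real', CD.smul_real',
      CD.ofReal_inj']
    norm_num
end

section
/- In the sedenions, no element of the 8-ball subalgebra spanned by {1, i_1, i_8, i_9} is a zero divisor: for any nonzero x in the real span of {1, i_1, i_8, i_9} and any nonzero sedenion y in the same span, x·y ≠ 0. -/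
section helpers
lemma CD.smul4 (r : ℝ) (x : CD 4) : r • x = ((r • x.1, r • x.2) : CD 4) := rfl
lemma CD.smul3 (r : ℝ) (x : CD 3) : r • x = ((r • x.1, r • x.2) : CD 3) := rfl
lemma CD.smul2 (r : ℝ) (x : CD 2) : r • x = ((r • x.1, r • x.2) : CD 2) := rfl
lemma CD.smul1 (r : ℝ) (x : CD 1) : r • x = ((r • x.1, r • x.2) : CD 1) := rfl
lemma CD.add4 (x y : CD 4) : x + y = ((x.1 + y.1, x.2 + y.2) : CD 4) := rfl
lemma CD.add3 (x y : CD 3) : x + y = ((x.1 + y.1, x.2 + y.2) : CD 3) := rfl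
lemma CD.add2 (x y : CD 2) : x + y = ((x.1 + y.1, x.2 + y.2) : CD 2) := rfl
lemma CD.add1 (x y : CD 1) : x + y = ((x.1 + y.1, x.2 + y.2) : CD 1) := rfl
lemma CD.sub4 (x y : CD 4) : x - y = ((x.1 - y.1, x.2 - y.2) : CD 4) := rfl
lemma CD.sub3 (x y : CD 3) : x - y = ((x.1 - y.1, x.2 - y.2) : CD 3) := rfl
lemma CD.sub2 (x y : CD 2) : x - y = ((x.1 - y.1, x.2 - y.2) : CD 2) := rfl
lemma CD.sub1 (x y : CD 1) : x - y = ((x.1 - y.1, x.2 - y.2) : CD 1) := rfl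
lemma CD.neg4 (x : CD 4) : -x = ((-x.1, -x.2) : CD 4) := rfl
lemma CD.neg3 (x : CD 3) : -x = ((-x.1, -x.2) : CD 3) := rfl
lemma CD.neg2 (x : CD 2) : -x = ((-x.1, -x.2) : CD 2) := rfl
lemma CD.neg1 (x : CD 1) : -x = ((-x.1, -x.2) : CD 1) := rfl
lemma CD.zero4 : (0 : CD 4) = (((0 : CD 3), (0 : CD 3)) : CD 4) := rfl
lemma CD.zero3 : (0 : CD 3) = (((0 : CD 2), (0 : CD 2)) : CD 3) := rfl
lemma CD.zero2 : (0 : CD 2) = (((0 : CD 1), (0 : CD 1)) : CD 2) := rfl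
lemma CD.zero1 : (0 : CD 1) = (((0 : CD 0), (0 : CD 0)) : CD 1) := rfl
lemma CD.zero0 : (0 : CD 0) = (0 : ℝ) := rfl
lemma CD.conj4 (x : CD 4) : CD.conj x = ((CD.conj x.1, -x.2) : CD 4) := rfl
lemma CD.conj3 (x : CD 3) : CD.conj x = ((CD.conj x.1, -x.2) : CD 3) := rfl
lemma CD.conj2 (x : CD 2) : CD.conj x = ((CD.conj x.1, -x.2) : CD 2) := rfl
lemma CD.conj1 (x : CD 1) : CD.conj x = ((CD.conj x.1, -x.2) : CD 1) := rfl
lemma CD.conj0 (x : CD 0) : CD.conj x = x := rfl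
lemma CD.mul4 (x y : CD 4) : CD.mul x y =
    ((CD.mul x.1 y.1 - CD.mul (CD.conj y.2) x.2,
      CD.mul y.2 x.1 + CD.mul x.2 (CD.conj y.1)) : CD 4) := rfl
lemma CD.mul3 (x y : CD 3) : CD.mul x y =
    ((CD.mul x.1 y.1 - CD.mul (CD.conj y.2) x.2,
      CD.mul y.2 x.1 + CD.mul x.2 (CD.conj y.1)) : CD 3) := rfl
lemma CD.mul2 (x y : CD 2) : CD.mul x y =
    ((CD.mul x.1 y.1 - CD.mul (CD.conj y.2) x.2,
      CD.mul y.2 x.1 + CD.mul x.2 (CD.conj y.1)) : CD 2) := rfl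
lemma CD.mul1 (x y : CD 1) : CD.mul x y =
    ((CD.mul x.1 y.1 - CD.mul (CD.conj y.2) x.2,
      CD.mul y.2 x.1 + CD.mul x.2 (CD.conj y.1)) : CD 1) := rfl
lemma CD.mul0 (x y : CD 0) : CD.mul x y = (show ℝ from x) * (show ℝ from y) := rfl
lemma CD.smul0 (r : ℝ) (x : CD 0) : r • x = r * (show ℝ from x) := rfl
lemma CD.ext4 (x y : CD 4) : x = y ↔ x.1 = y.1 ∧ x.2 = y.2 := Prod.ext_iff
lemma CD.ext3 (x y : CD 3) : x = y ↔ x.1 = y.1 ∧ x.2 = y.2 := Prod.ext_iff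
lemma CD.ext2 (x y : CD 2) : x = y ↔ x.1 = y.1 ∧ x.2 = y.2 := Prod.ext_iff
lemma CD.ext1 (x y : CD 1) : x = y ↔ x.1 = y.1 ∧ x.2 = y.2 := Prod.ext_iff
lemma CD.fa4 (x y : CD 4) : (x + y).1 = x.1 + y.1 := rfl
lemma CD.sa4 (x y : CD 4) : (x + y).2 = x.2 + y.2 := rfl
lemma CD.fs4 (x y : CD 4) : (x - y).1 = x.1 - y.1 := rfl
lemma CD.ss4 (x y : CD 4) : (x - y).2 = x.2 - y.2 := rfl
lemma CD.fn4 (x : CD 4) : (-x).1 = -x.1 := rfl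
lemma CD.sn4 (x : CD 4) : (-x).2 = -x.2 := rfl
lemma CD.fm4 (r : ℝ) (x : CD 4) : (r • x).1 = r • x.1 := rfl
lemma CD.sm4 (r : ℝ) (x : CD 4) : (r • x).2 = r • x.2 := rfl
lemma CD.fz4 : (0 : CD 4).1 = (0 : CD 3) := rfl
lemma CD.sz4 : (0 : CD 4).2 = (0 : CD 3) := rfl
lemma CD.fc4 (x : CD 4) : (CD.conj x).1 = CD.conj x.1 := rfl
lemma CD.sc4 (x : CD 4) : (CD.conj x).2 = -x.2 := rfl
lemma CD.fp4 (x y : CD 4) : (CD.mul x y).1 = CD.mul x.1 y.1 - CD.mul (CD.conj y.2) x.2 := rfl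
lemma CD.sp4 (x y : CD 4) : (CD.mul x y).2 = CD.mul y.2 x.1 + CD.mul x.2 (CD.conj y.1) := rfl
lemma CD.fe4 (k : ℕ) : (CD.e 4 k).1 = if k < 8 then CD.e 3 k else 0 := by
  rw [CD.e]; by_cases hk : k < 8 <;> simp [hk, CD.e]
lemma CD.se4 (k : ℕ) : (CD.e 4 k).2 = if k < 8 then 0 else CD.e 3 (k - 8) := by
  rw [CD.e]; by_cases hk : k < 8 <;> simp [hk, CD.e]
lemma CD.fa3 (x y : CD 3) : (x + y).1 = x.1 + y.1 := rfl
lemma CD.sa3 (x y : CD 3) : (x + y).2 = x.2 + y.2 := rfl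
lemma CD.fs3 (x y : CD 3) : (x - y).1 = x.1 - y.1 := rfl
lemma CD.ss3 (x y : CD 3) : (x - y).2 = x.2 - y.2 := rfl
lemma CD.fn3 (x : CD 3) : (-x).1 = -x.1 := rfl
lemma CD.sn3 (x : CD 3) : (-x).2 = -x.2 := rfl
lemma CD.fm3 (r : ℝ) (x : CD 3) : (r • x).1 = r • x.1 := rfl
lemma CD.sm3 (r : ℝ) (x : CD 3) : (r • x).2 = r • x.2 := rfl
lemma CD.fz3 : (0 : CD 3).1 = (0 : CD 2) := rfl
lemma CD.sz3 : (0 : CD 3).2 = (0 : CD 2) := rfl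
lemma CD.fc3 (x : CD 3) : (CD.conj x).1 = CD.conj x.1 := rfl
lemma CD.sc3 (x : CD 3) : (CD.conj x).2 = -x.2 := rfl
lemma CD.fp3 (x y : CD 3) : (CD.mul x y).1 = CD.mul x.1 y.1 - CD.mul (CD.conj y.2) x.2 := rfl
lemma CD.sp3 (x y : CD 3) : (CD.mul x y).2 = CD.mul y.2 x.1 + CD.mul x.2 (CD.conj y.1) := rfl
lemma CD.fe3 (k : ℕ) : (CD.e 3 k).1 = if k < 4 then CD.e 2 k else 0 := by
  rw [CD.e]; by_cases hk : k < 4 <;> simp [hk, CD.e]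
lemma CD.se3 (k : ℕ) : (CD.e 3 k).2 = if k < 4 then 0 else CD.e 2 (k - 4) := by
  rw [CD.e]; by_cases hk : k < 4 <;> simp [hk, CD.e]
lemma CD.fa2 (x y : CD 2) : (x + y).1 = x.1 + y.1 := rfl
lemma CD.sa2 (x y : CD 2) : (x + y).2 = x.2 + y.2 := rfl
lemma CD.fs2 (x y : CD 2) : (x - y).1 = x.1 - y.1 := rfl
lemma CD.ss2 (x y : CD 2) : (x - y).2 = x.2 - y.2 := rfl
lemma CD.fn2 (x : CD 2) : (-x).1 = -x.1 := rfl
lemma CD.sn2 (x : CD 2) : (-x).2 = -x.2 := rfl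
lemma CD.fm2 (r : ℝ) (x : CD 2) : (r • x).1 = r • x.1 := rfl
lemma CD.sm2 (r : ℝ) (x : CD 2) : (r • x).2 = r • x.2 := rfl
lemma CD.fz2 : (0 : CD 2).1 = (0 : CD 1) := rfl
lemma CD.sz2 : (0 : CD 2).2 = (0 : CD 1) := rfl
lemma CD.fc2 (x : CD 2) : (CD.conj x).1 = CD.conj x.1 := rfl
lemma CD.sc2 (x : CD 2) : (CD.conj x).2 = -x.2 := rfl
lemma CD.fp2 (x y : CD 2) : (CD.mul x y).1 = CD.mul x.1 y.1 - CD.mul (CD.conj y.2) x.2 := rfl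
lemma CD.sp2 (x y : CD 2) : (CD.mul x y).2 = CD.mul y.2 x.1 + CD.mul x.2 (CD.conj y.1) := rfl
lemma CD.fe2 (k : ℕ) : (CD.e 2 k).1 = if k < 2 then CD.e 1 k else 0 := by
  rw [CD.e]; by_cases hk : k < 2 <;> simp [hk, CD.e]
lemma CD.se2 (k : ℕ) : (CD.e 2 k).2 = if k < 2 then 0 else CD.e 1 (k - 2) := by
  rw [CD.e]; by_cases hk : k < 2 <;> simp [hk, CD.e]
lemma CD.fa1 (x y : CD 1) : (x + y).1 = (show ℝ from x.1) + (show ℝ from y.1) := rfl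
lemma CD.sa1 (x y : CD 1) : (x + y).2 = (show ℝ from x.2) + (show ℝ from y.2) := rfl
lemma CD.fs1 (x y : CD 1) : (x - y).1 = (show ℝ from x.1) - (show ℝ from y.1) := rfl
lemma CD.ss1 (x y : CD 1) : (x - y).2 = (show ℝ from x.2) - (show ℝ from y.2) := rfl
lemma CD.fn1 (x : CD 1) : (-x).1 = -(show ℝ from x.1) := rfl
lemma CD.sn1 (x : CD 1) : (-x).2 = -(show ℝ from x.2) := rfl
lemma CD.fm1 (r : ℝ) (x : CD 1) : (r • x).1 = r • x.1 := rfl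
lemma CD.sm1 (r : ℝ) (x : CD 1) : (r • x).2 = r • x.2 := rfl
lemma CD.fz1 : (0 : CD 1).1 = (0 : ℝ) := rfl
lemma CD.sz1 : (0 : CD 1).2 = (0 : ℝ) := rfl
lemma CD.fc1 (x : CD 1) : (CD.conj x).1 = CD.conj x.1 := rfl
lemma CD.sc1 (x : CD 1) : (CD.conj x).2 = -(show ℝ from x.2) := rfl
lemma CD.fp1 (x y : CD 1) : (CD.mul x y).1 = (show ℝ from CD.mul x.1 y.1) - (show ℝ from CD.mul (CD.conj y.2) x.2) := rfl
lemma CD.sp1 (x y : CD 1) : (CD.mul x y).2 = (show ℝ from CD.mul y.2 x.1) + (show ℝ from CD.mul x.2 (CD.conj y.1)) := rfl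
lemma CD.fe1 (k : ℕ) : (CD.e 1 k).1 = if k < 1 then (1 : ℝ) else 0 := by
  by_cases hk : k < 1 <;> simp [hk, CD.e] <;> rfl
lemma CD.se1 (k : ℕ) : (CD.e 1 k).2 = if k < 1 then (0 : ℝ) else 1 := by
  by_cases hk : k < 1 <;> simp [hk, CD.e] <;> rfl
lemma CD.a0 (x y : CD 0) : x + y = (show ℝ from x) + (show ℝ from y) := rfl
lemma CD.s0 (x y : CD 0) : x - y = (show ℝ from x) - (show ℝ from y) := rfl
lemma CD.n0 (x : CD 0) : -x = -(show ℝ from x) := rfl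
lemma CD.e0 (k : ℕ) : CD.e 0 k = (1 : ℝ) := rfl
lemma CD.mr (x y : ℝ) : @CD.mul 0 x y = x * y := rfl
lemma CD.cr (x : ℝ) : @CD.conj 0 x = x := rfl
lemma CD.smr (r x : ℝ) : @HSMul.hSMul ℝ (CD 0) (CD 0) _ r x = r * x := rfl
end helpers


/-- No element of the 8-ball subalgebra spanned by `{1, i_1, i_8, i_9}` is a zero divisor
within that subalgebra. -/
theorem eight_ball_no_zero_divisors
    (x y : CD 4)
    (hx : x ∈ Submodule.span ℝ ({CD.e 4 0, CD.e 4 1, CD.e 4 8, CD.e 4 9} : Set (CD 4)))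
    (hy : y ∈ Submodule.span ℝ ({CD.e 4 0, CD.e 4 1, CD.e 4 8, CD.e 4 9} : Set (CD 4)))
    (hx0 : x ≠ 0) (hy0 : y ≠ 0) :
    CD.mul x y ≠ 0 := by
  simp only [Submodule.mem_span_insert, Submodule.mem_span_singleton] at hx hy
  obtain ⟨a, _, ⟨b, _, ⟨c, _, ⟨d, rfl⟩, rfl⟩, rfl⟩, rfl⟩ := hx
  obtain ⟨p, _, ⟨u, _, ⟨r, _, ⟨s, rfl⟩, rfl⟩, rfl⟩, rfl⟩ := hy
  intro h
  have hxs : a ^ 2 + b ^ 2 + c ^ 2 + d ^ 2 ≠ 0 := by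
    intro hs
    have ha : a = 0 := pow_eq_zero_iff two_ne_zero |>.mp (by nlinarith [sq_nonneg a, sq_nonneg b, sq_nonneg c, sq_nonneg d])
    have hb : b = 0 := pow_eq_zero_iff two_ne_zero |>.mp (by nlinarith [sq_nonneg a, sq_nonneg b, sq_nonneg c, sq_nonneg d])
    have hc : c = 0 := pow_eq_zero_iff two_ne_zero |>.mp (by nlinarith [sq_nonneg a, sq_nonneg b, sq_nonneg c, sq_nonneg d])
    have hd : d = 0 := pow_eq_zero_iff two_ne_zero |>.mp (by nlinarith [sq_nonneg a, sq_nonneg b, sq_nonneg c, sq_nonneg d])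
    exact hx0 (by rw [ha, hb, hc, hd]; simp only [zero_smul, add_zero])
  have hys : p ^ 2 + u ^ 2 + r ^ 2 + s ^ 2 ≠ 0 := by
    intro hs
    have ha : p = 0 := pow_eq_zero_iff two_ne_zero |>.mp (by nlinarith [sq_nonneg p, sq_nonneg u, sq_nonneg r, sq_nonneg s])
    have hb : u = 0 := pow_eq_zero_iff two_ne_zero |>.mp (by nlinarith [sq_nonneg p, sq_nonneg u, sq_nonneg r, sq_nonneg s])
    have hc : r = 0 := pow_eq_zero_iff two_ne_zero |>.mp (by nlinarith [sq_nonneg p, sq_nonneg u, sq_nonneg r, sq_nonneg s])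
    have hd : s = 0 := pow_eq_zero_iff two_ne_zero |>.mp (by nlinarith [sq_nonneg p, sq_nonneg u, sq_nonneg r, sq_nonneg s])
    exact hy0 (by rw [ha, hb, hc, hd]; simp only [zero_smul, add_zero])
  have hx2 : 0 < a ^ 2 + b ^ 2 + c ^ 2 + d ^ 2 := lt_of_le_of_ne (by positivity) (Ne.symm hxs)
  have hy2 : 0 < p ^ 2 + u ^ 2 + r ^ 2 + s ^ 2 := lt_of_le_of_ne (by positivity) (Ne.symm hys)
  have h0 := congrArg (fun z : CD 4 => (show ℝ from z.1.1.1.1)) h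
  have h1 := congrArg (fun z : CD 4 => (show ℝ from z.1.1.1.2)) h
  have h8 := congrArg (fun z : CD 4 => (show ℝ from z.2.1.1.1)) h
  have h9 := congrArg (fun z : CD 4 => (show ℝ from z.2.1.1.2)) h
  simp only [CD.fa4, CD.sa4, CD.fs4, CD.ss4, CD.fn4, CD.sn4, CD.fm4, CD.sm4, CD.fz4, CD.sz4,
    CD.fc4, CD.sc4, CD.fp4, CD.sp4, CD.fe4, CD.se4,
    CD.fa3, CD.sa3, CD.fs3, CD.ss3, CD.fn3, CD.sn3, CD.fm3, CD.sm3, CD.fz3, CD.sz3,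
    CD.fc3, CD.sc3, CD.fp3, CD.sp3, CD.fe3, CD.se3,
    CD.fa2, CD.sa2, CD.fs2, CD.ss2, CD.fn2, CD.sn2, CD.fm2, CD.sm2, CD.fz2, CD.sz2,
    CD.fc2, CD.sc2, CD.fp2, CD.sp2, CD.fe2, CD.se2,
    CD.fa1, CD.sa1, CD.fs1, CD.ss1, CD.fn1, CD.sn1, CD.fm1, CD.sm1, CD.fz1, CD.sz1,
    CD.fc1, CD.sc1, CD.fp1, CD.sp1, CD.fe1, CD.se1,
    CD.a0, CD.s0, CD.n0, CD.mul0, CD.smul0, CD.conj0, CD.mr, CD.cr, CD.smr, smul_eq_mul,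
    Nat.reduceLT, Nat.reduceSub, ↓reduceIte] at h0 h1 h8 h9
  clear h
  have h0' : (a * p - u * b - (r * c + d * s) : ℝ) = 0 := by linear_combination h0
  have h1' : (u * a + b * p - (d * r + -(s * c)) : ℝ) = 0 := by linear_combination h1
  have h8' : (r * a - b * s + (c * p + u * d) : ℝ) = 0 := by linear_combination h8
  have h9' : (b * r + s * a + (-(u * c) + d * p) : ℝ) = 0 := by linear_combination h9
  have key : (a ^ 2 + b ^ 2 + c ^ 2 + d ^ 2) * (p ^ 2 + u ^ 2 + r ^ 2 + s ^ 2) = 0 := by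
    linear_combination (a * p - b * u - c * r - d * s) * h0' +
      (a * u + b * p + c * s - d * r) * h1' +
      (a * r - b * s + c * p + d * u) * h8' +
      (a * s + b * r - c * u + d * p) * h9'
  exact (mul_pos hx2 hy2).ne' key
end
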